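/- Let d ≥ 3 be an integer, q ≥ 3 an integer, and t ≥ (q−1)^{2/d} a real with t > 1. Define R(t) = (t^{d+1} + (q−2)t^d − (q−1)t) / ((t^d − t)(t^{d−1} + q − 1)) and R'(t) = (t + q − 1)/(t^{d−1} + q − 1). Then R(t) ≤ R'(t). -/

import Mathlib

/-- For `t ≥ (q−1)^{2/d}` with `t > 1`, the quantity
`R(t) = (t^{d+1} + (q−2)t^d − (q−1)t)/((t^d − t)(t^{d−1}+q−1))` is at most
`R'(t) = (t + q − 1)/(t^{d−1} + q − 1)`. -/
theorem stmt_7 (d q : ℕ) (hd : 3 ≤ d) (hq : 3 ≤ q) (t : ℝ) (ht1 : 1 < t)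
    (htc : ((q : ℝ) - 1) ^ ((2 : ℝ) / (d : ℝ)) ≤ t) :
    (t ^ (d + 1) + ((q : ℝ) - 2) * t ^ d - ((q : ℝ) - 1) * t) /
        ((t ^ d - t) * (t ^ (d - 1) + (q : ℝ) - 1)) ≤
      (t + (q : ℝ) - 1) / (t ^ (d - 1) + (q : ℝ) - 1) := by
  have ht0 : (0:ℝ) < t := lt_trans one_pos ht1
  have hq1 : (2:ℝ) ≤ (q:ℝ) := by exact_mod_cast le_trans (by norm_num) hq
  have hA : (0:ℝ) < t ^ (d - 1) + (q:ℝ) - 1 := by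
    have : (0:ℝ) < t ^ (d-1) := pow_pos ht0 _
    linarith
  have htd : t < t ^ d := by
    calc t = t ^ 1 := (pow_one t).symm
    _ < t ^ d := pow_lt_pow_right₀ ht1 (by omega)
  have hD : (0:ℝ) < t ^ d - t := by linarith
  have ht2 : t ^ 2 ≤ t ^ d := pow_le_pow_right₀ ht1.le (by omega)
  have key : t ^ (d + 1) + ((q : ℝ) - 2) * t ^ d - ((q : ℝ) - 1) * t ≤
      (t + (q:ℝ) - 1) * (t ^ d - t) := by
    have : t ^ (d+1) = t * t ^ d := by ring
    nlinarith [sq_nonneg t]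
  rw [div_le_div_iff₀ (mul_pos hD hA) hA]
  nlinarith [mul_le_mul_of_nonneg_right key hA.le]
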